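/- For each infinite X ⊆ ℕ define h_X(n) = next(n, X) + |Xᶜ ∩ {0,…,n−1}|, and let F be the downward closure under ≤* (within ω^↑ω) of {h_X : X an infinite subset of ℕ}. Then F belongs to the S-class and b(F) = 2; in particular no single member of F is unbounded in F, since whenever Y ⊆ X with X ∖ Y infinite one has h_X ≺ h_Y. -/

import Mathlib

open Filter Set

/-- The set of monotone (nondecreasing) functions ℕ → ℕ, i.e. ω^↑ω. -/
def MonoFam : Set (ℕ → ℕ) := {f | Monotone f}

/-- `f ≤* g` : `f n ≤ g n` for all but finitely many `n`. -/
def LeStar (f g : ℕ → ℕ) : Prop := ∀ᶠ n in atTop, f n ≤ g n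

/-- `f <* g` : `f n < g n` for all but finitely many `n`. -/
def LtStar (f g : ℕ → ℕ) : Prop := ∀ᶠ n in atTop, f n < g n

/-- `f ≺ g` : `lim (g n - f n) = +∞`. -/
def Prec (f g : ℕ → ℕ) : Prop := ∀ N : ℕ, ∀ᶠ n in atTop, f n + N ≤ g n

/-- `F` is closed downward under `≤*` within the monotone functions. -/
def DownwardClosed (F : Set (ℕ → ℕ)) : Prop :=
  ∀ f, Monotone f → ∀ g ∈ F, LeStar f g → f ∈ F

/-- `H` is unbounded in `F`. -/
def UnboundedIn (H F : Set (ℕ → ℕ)) : Prop :=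
  ∀ f ∈ F, ∃ h ∈ H, ¬ LtStar h f

/-- `H` dominates `F`. -/
def DominatesIn (H F : Set (ℕ → ℕ)) : Prop :=
  ∀ f ∈ F, ∃ h ∈ H, LeStar f h

/-- The bounding number `b(F)`. -/
noncomputable def bNum (F : Set (ℕ → ℕ)) : Cardinal :=
  sInf {c : Cardinal | ∃ H : Set (ℕ → ℕ), H ⊆ F ∧ UnboundedIn H F ∧ Cardinal.mk H = c}

/-- The dominating number `d(F)`. -/
noncomputable def dNum (F : Set (ℕ → ℕ)) : Cardinal :=
  sInf {c : Cardinal | ∃ H : Set (ℕ → ℕ), H ⊆ F ∧ DominatesIn H F ∧ Cardinal.mk H = c}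

/-- Membership in the S-class. -/
def SClass (F : Set (ℕ → ℕ)) : Prop :=
  ∃ h g : ℕ → ℕ, Monotone h ∧ Monotone g ∧
    (∀ f ∈ F, ∃ᶠ n in atTop, f n ≤ h n) ∧
    (∀ f, Monotone f → (∃ᶠ n in atTop, f n ≤ g n) → f ∈ F)

/-- A nonprincipal ultrafilter. -/
def NonPrincipal (U : Ultrafilter ℕ) : Prop := ∀ a : ℕ, U ≠ pure a

/-- Membership in the U-class for an ultrafilter `U`. -/
def UClass (U : Ultrafilter ℕ) (F : Set (ℕ → ℕ)) : Prop :=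
  ∃ h g : ℕ → ℕ, Monotone h ∧ Monotone g ∧
    (∀ f ∈ F, {n | f n ≤ h n} ∈ U) ∧
    (∀ f, Monotone f → {n | f n ≤ g n} ∈ U → f ∈ F)

/-- `χ(U)`, the least cardinality of a base generating the ultrafilter `U`. -/
noncomputable def ultraChi (U : Ultrafilter ℕ) : Cardinal :=
  sInf {c : Cardinal | ∃ B : Set (Set ℕ),
    (∀ b ∈ B, b ∈ U) ∧ (∀ A ∈ U, ∃ b ∈ B, b ⊆ A) ∧ Cardinal.mk B = c}

/-- The ultrafilter number `𝔲`. -/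
noncomputable def uNum : Cardinal :=
  sInf {c : Cardinal | ∃ U : Ultrafilter ℕ, NonPrincipal U ∧ ultraChi U = c}

/-- `A ⊆* B` : `A \ B` is finite. -/
def SubsetStar (A B : Set ℕ) : Prop := (A \ B).Finite

/-- A P-point. -/
def PPoint (V : Ultrafilter ℕ) : Prop :=
  NonPrincipal V ∧ ∀ C : Set (Set ℕ), C.Countable → (∀ A ∈ C, A ∈ V) →
    ∃ B ∈ V, ∀ A ∈ C, SubsetStar B A

/-- A `P_κ`-point. -/
def PKappaPoint (κ : Cardinal) (V : Ultrafilter ℕ) : Prop :=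
  NonPrincipal V ∧ ∀ C : Set (Set ℕ), Cardinal.mk C < κ → (∀ A ∈ C, A ∈ V) →
    ∃ B ∈ V, ∀ A ∈ C, SubsetStar B A

/-- `next(n, X)` : the least element of `X` which is `≥ n`. -/
noncomputable def nextIn (n : ℕ) (X : Set ℕ) : ℕ := sInf {x | x ∈ X ∧ n ≤ x}

/-- `F↓` : the monotone functions `g` with `f ≺ g` for all `f ∈ F`. -/
def FDown (F : Set (ℕ → ℕ)) : Set (ℕ → ℕ) := {g | Monotone g ∧ ∀ f ∈ F, Prec f g}

/-- `F` has a countable upper bound. -/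
def CountableUpperBound (F : Set (ℕ → ℕ)) : Prop :=
  ∃ G : Set (ℕ → ℕ), G.Countable ∧ G ⊆ FDown F ∧
    ¬ ∃ p, Monotone p ∧ (∀ f ∈ F, Prec f p) ∧ (∀ g ∈ G, Prec p g)

/-- `h_X(n) = next(n, X) + |Xᶜ ∩ [0, n)|`. -/
noncomputable def hFun (X : Set ℕ) : ℕ → ℕ :=
  fun n => nextIn n X + (Xᶜ ∩ Set.Iio n).ncard

lemma exists_mem_ge {X : Set ℕ} (hX : X.Infinite) (n : ℕ) : {x | x ∈ X ∧ n ≤ x}.Nonempty := by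
  obtain ⟨b, hb, hnb⟩ := hX.exists_gt n
  exact ⟨b, hb, hnb.le⟩

lemma nextIn_mem {X : Set ℕ} (hX : X.Infinite) (n : ℕ) : nextIn n X ∈ X ∧ n ≤ nextIn n X :=
  Nat.sInf_mem (exists_mem_ge hX n)

lemma nextIn_le {X : Set ℕ} {n x : ℕ} (hx : x ∈ X) (hnx : n ≤ x) : nextIn n X ≤ x :=
  Nat.sInf_le ⟨hx, hnx⟩

lemma nextIn_mono {X : Set ℕ} (hX : X.Infinite) {m n : ℕ} (hmn : m ≤ n) :
    nextIn m X ≤ nextIn n X :=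
  nextIn_le (nextIn_mem hX n).1 (hmn.trans (nextIn_mem hX n).2)

lemma nextIn_self {X : Set ℕ} {n : ℕ} (hn : n ∈ X) : nextIn n X = n :=
  le_antisymm (nextIn_le hn le_rfl) (Nat.sInf_mem (⟨n, hn, le_rfl⟩ : {x | x ∈ X ∧ n ≤ x}.Nonempty)).2

lemma cnt_fin (X : Set ℕ) (n : ℕ) : (X ∩ Set.Iio n).Finite :=
  (Set.finite_Iio n).subset inter_subset_right

lemma ncard_Iio' (n : ℕ) : (Set.Iio n).ncard = n := by
  rw [← Finset.coe_Iio, Set.ncard_coe_finset, Nat.card_Iio]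

lemma hFun_mono {X : Set ℕ} (hX : X.Infinite) : Monotone (hFun X) := by
  intro m n hmn
  exact Nat.add_le_add (nextIn_mono hX hmn)
    (Set.ncard_le_ncard (Set.inter_subset_inter_right _ (Set.Iio_subset_Iio hmn)) (cnt_fin _ n))

lemma count_ge {S : Set ℕ} (hS : S.Infinite) (N : ℕ) :
    ∀ᶠ n in atTop, N ≤ (S ∩ Set.Iio n).ncard := by
  obtain ⟨T, hTS, hcard⟩ := hS.exists_subset_card_eq N
  have hm : ∀ x ∈ T, x < T.sup id + 1 := fun x hx => Nat.lt_succ_of_le (Finset.le_sup (f := id) hx)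
  filter_upwards [eventually_ge_atTop (T.sup id + 1)] with n hn
  calc N = T.card := hcard.symm
  _ = (↑T : Set ℕ).ncard := (Set.ncard_coe_finset T).symm
  _ ≤ (S ∩ Set.Iio n).ncard := Set.ncard_le_ncard
      (fun x hx => ⟨hTS hx, lt_of_lt_of_le (hm x (Finset.mem_coe.mp hx)) hn⟩) (cnt_fin S n)

lemma prec_hFun' {X Y : Set ℕ} (hX : X.Infinite) (hY : Y.Infinite) (hYX : Y ⊆ X)
    (hd : (X \ Y).Infinite) (N : ℕ) : ∀ᶠ n in atTop, hFun X n + N ≤ hFun Y n := by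
  filter_upwards [count_ge hd N] with n hn
  have h1 : nextIn n X ≤ nextIn n Y := nextIn_le (hYX (nextIn_mem hY n).1) (nextIn_mem hY n).2
  have hdisj : Disjoint (Xᶜ ∩ Set.Iio n) ((X \ Y) ∩ Set.Iio n) := by
    rw [Set.disjoint_left]
    rintro x ⟨hxc, -⟩ ⟨⟨hxX, -⟩, -⟩
    exact hxc hxX
  have hsub : (Xᶜ ∩ Set.Iio n) ∪ ((X \ Y) ∩ Set.Iio n) ⊆ Yᶜ ∩ Set.Iio n := by
    rintro x (⟨hxc, hlt⟩ | ⟨⟨hxX, hxY⟩, hlt⟩)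
    · exact ⟨fun hxY => hxc (hYX hxY), hlt⟩
    · exact ⟨hxY, hlt⟩
  have h2 := Set.ncard_le_ncard hsub (cnt_fin _ n)
  rw [Set.ncard_union_eq hdisj (cnt_fin _ n) (cnt_fin _ n)] at h2
  simp only [hFun]
  omega

lemma hFun_range_eq {u : ℕ → ℕ} (hu : StrictMono u) {n k : ℕ}
    (hk : ∀ j, n ≤ u j ↔ k ≤ j) : k ≤ n ∧ hFun (Set.range u) n = u k + (n - k) := by
  have hmemlt : ∀ j, u j < n ↔ j < k := by
    intro j
    rw [← not_le, ← not_le]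
    exact not_congr (hk j)
  have hkn : k ≤ n := by
    rcases Nat.eq_zero_or_pos k with h0 | hpos
    · omega
    · have h1 : u (k - 1) < n := (hmemlt _).mpr (by omega)
      have h2 : k - 1 ≤ u (k - 1) := hu.le_apply
      omega
  have hnext : nextIn n (Set.range u) = u k := by
    apply le_antisymm
    · exact nextIn_le ⟨k, rfl⟩ ((hk k).mpr le_rfl)
    · refine le_csInf ⟨u k, ⟨⟨k, rfl⟩, (hk k).mpr le_rfl⟩⟩ ?_
      rintro x ⟨⟨j, rfl⟩, hnx⟩
      exact hu.monotone ((hk j).mp hnx)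
  have himg : Set.range u ∩ Set.Iio n = u '' Set.Iio k := by
    ext x
    constructor
    · rintro ⟨⟨j, rfl⟩, hlt⟩; exact ⟨j, (hmemlt j).mp hlt, rfl⟩
    · rintro ⟨j, hj, rfl⟩; exact ⟨⟨j, rfl⟩, (hmemlt j).mpr hj⟩
  have hc1 : (Set.range u ∩ Set.Iio n).ncard = k := by
    rw [himg, Set.ncard_image_of_injective _ hu.injective, ncard_Iio']
  have hdiff : (Set.range u)ᶜ ∩ Set.Iio n = Set.Iio n \ (Set.range u ∩ Set.Iio n) := by
    ext x
    simp only [Set.mem_inter_iff, Set.mem_compl_iff, Set.mem_diff]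
    tauto
  refine ⟨hkn, ?_⟩
  simp only [hFun, hnext, hdiff, Set.ncard_diff inter_subset_right (cnt_fin _ n), hc1, ncard_Iio']

def u1 : ℕ → ℕ := fun k => 4 ^ (2 * k)
def u2 : ℕ → ℕ := fun k => 4 ^ (2 * k + 1)

lemma hu1 : StrictMono u1 := fun a b hab =>
  Nat.pow_lt_pow_right (by norm_num) (by omega)
lemma hu2 : StrictMono u2 := fun a b hab =>
  Nat.pow_lt_pow_right (by norm_num) (by omega)

lemma self_lt_pow (k : ℕ) : k < 4 ^ (2 * k) :=
  lt_of_lt_of_le (Nat.lt_two_pow_self (n := k))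
    (le_trans (Nat.pow_le_pow_left (by norm_num) k) (Nat.pow_le_pow_right (by norm_num) (by omega)))

lemma self_lt_pow' (k : ℕ) : k < 4 ^ (2 * k + 1) :=
  lt_of_lt_of_le (self_lt_pow k) (Nat.pow_le_pow_right (by norm_num) (by omega))

lemma exists_k (u : ℕ → ℕ) (hself : ∀ k, k < u k) (hm : Monotone u) (n : ℕ) :
    ∃ k, (∀ j, n ≤ u j ↔ k ≤ j) := by
  have hex : ∃ k, n ≤ u k := ⟨n, (hself n).le⟩
  refine ⟨Nat.find hex, fun j => ⟨fun h => ?_, fun h => le_trans (Nat.find_spec hex) (hm h)⟩⟩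
  by_contra hc
  exact Nat.find_min hex (by omega) h

lemma pow4_lt_iff {a b : ℕ} : 4 ^ a < 4 ^ b ↔ a < b :=
  Nat.pow_lt_pow_iff_right (by norm_num)

lemma core (n : ℕ) :
    2 * n ≤ hFun (Set.range u1) n ∨ 2 * n ≤ hFun (Set.range u2) n := by
  obtain ⟨k, hk⟩ := exists_k u1 self_lt_pow hu1.monotone n
  obtain ⟨m, hm⟩ := exists_k u2 self_lt_pow' hu2.monotone n
  obtain ⟨hkn, hX⟩ := hFun_range_eq hu1 hk
  obtain ⟨hmn, hY⟩ := hFun_range_eq hu2 hm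
  rw [hX, hY]
  by_contra hcon
  push_neg at hcon
  obtain ⟨hA, hB⟩ := hcon
  -- hA : u1 k + (n - k) < 2 * n, hB : u2 m + (n - m) < 2 * n
  have hA' : 4 ^ (2 * k) < n + k := by simp only [u1] at hA; omega
  have hB' : 4 ^ (2 * m + 1) < n + m := by simp only [u2] at hB; omega
  have hnk : n ≤ 4 ^ (2 * k) := (hk k).mpr le_rfl
  have hnm : n ≤ 4 ^ (2 * m + 1) := (hm m).mpr le_rfl
  rcases le_or_gt k m with hkm | hmk
  · -- 4 * 4^(2k) ≤ 4^(2m+1) < n + m ≤ 4^(2k) + m so 3 * 4^(2k) < m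
    have h1 : 4 ^ (2 * k + 1) ≤ 4 ^ (2 * m + 1) := Nat.pow_le_pow_right (by norm_num) (by omega)
    have h2 : 4 ^ (2 * k + 1) = 4 * 4 ^ (2 * k) := by ring
    have h3 : 3 * 4 ^ (2 * k) < m := by omega
    have hm1 : 1 ≤ m := by have := pow_pos (show 0 < 4 by norm_num) (2 * k); omega
    have h4 : ¬ n ≤ u2 (m - 1) := by rw [hm (m - 1)]; omega
    have h5 : 4 ^ (2 * (m - 1) + 1) < n := by simpa [u2] using Nat.lt_of_not_le h4
    have h6 : 2 * (m - 1) + 1 < 2 * k := pow4_lt_iff.mp (lt_of_lt_of_le h5 hnk)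
    have h7 : k < 4 ^ (2 * k) := self_lt_pow k
    omega
  · have h1 : 4 ^ (2 * m + 2) ≤ 4 ^ (2 * k) := Nat.pow_le_pow_right (by norm_num) (by omega)
    have h2 : 4 ^ (2 * m + 2) = 4 * 4 ^ (2 * m + 1) := by ring
    have h3 : 3 * 4 ^ (2 * m + 1) < k := by omega
    have hk1 : 1 ≤ k := by have := pow_pos (show 0 < 4 by norm_num) (2 * m + 1); omega
    have h4 : ¬ n ≤ u1 (k - 1) := by rw [hk (k - 1)]; omega
    have h5 : 4 ^ (2 * (k - 1)) < n := by simpa [u1] using Nat.lt_of_not_le h4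
    have h6 : 2 * (k - 1) < 2 * m + 1 := pow4_lt_iff.mp (lt_of_lt_of_le h5 hnm)
    have h7 : m < 4 ^ (2 * m + 1) := self_lt_pow' m
    omega

lemma split_infinite {X : Set ℕ} (hX : X.Infinite) :
    ∃ Y, Y ⊆ X ∧ Y.Infinite ∧ (X \ Y).Infinite := by
  have e : ℕ ↪ ↥X := Set.Infinite.natEmbedding X hX
  set g : ℕ → ℕ := fun k => (e k : ℕ) with hg
  have hginj : Function.Injective g := fun a b hab => e.injective (Subtype.val_injective hab)
  set D : Set ℕ := Set.range (fun j => g (2 * j)) with hD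
  have hDX : D ⊆ X := by rintro x ⟨j, rfl⟩; exact (e (2 * j)).2
  refine ⟨X \ D, diff_subset, ?_, ?_⟩
  · have hsub : Set.range (fun j => g (2 * j + 1)) ⊆ X \ D := by
      rintro x ⟨j, rfl⟩
      refine ⟨(e (2 * j + 1)).2, ?_⟩
      rintro ⟨j', hj'⟩
      have := hginj hj'
      omega
    exact Set.Infinite.mono hsub
      (Set.infinite_range_of_injective (fun a b hab => by have := hginj hab; omega))
  · rw [Set.diff_diff_cancel_left hDX]
    exact Set.infinite_range_of_injective (fun a b hab => by have := hginj hab; omega)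

lemma in_Z_le {Z : Set ℕ} {n : ℕ} (hn : n ∈ Z) : hFun Z n ≤ 2 * n := by
  have h1 : nextIn n Z = n := nextIn_self hn
  have h2 : (Zᶜ ∩ Set.Iio n).ncard ≤ n :=
    le_trans (Set.ncard_le_ncard inter_subset_right (Set.finite_Iio n)) (le_of_eq (ncard_Iio' n))
  simp only [hFun, h1]
  omega

lemma tail_infinite {Z : Set ℕ} (hZ : Z.Infinite) (t : ℕ) : {n | n ∈ Z ∧ t ≤ n}.Infinite := by
  have hsub : Z \ Set.Iio t ⊆ {n | n ∈ Z ∧ t ≤ n} := by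
    rintro x ⟨hx, hlt⟩
    exact ⟨hx, not_lt.mp hlt⟩
  exact Set.Infinite.mono hsub (hZ.diff (Set.finite_Iio t))

lemma not_ltStar_of_infinite {h f : ℕ → ℕ} (hinf : {n | f n ≤ h n}.Infinite) :
    ¬ (∀ᶠ n in atTop, h n < f n) := by
  intro hlt
  obtain ⟨n, h1, h2⟩ := ((Nat.frequently_atTop_iff_infinite.mpr hinf).and_eventually hlt).exists
  omega


abbrev Ffam : Set (ℕ → ℕ) := {f | Monotone f ∧ ∃ X : Set ℕ, X.Infinite ∧ LeStar f (hFun X)}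

lemma hFun_mem_F {X : Set ℕ} (hX : X.Infinite) : hFun X ∈ Ffam :=
  ⟨hFun_mono hX, X, hX, Eventually.of_forall fun _ => le_rfl⟩

lemma singleton_not_unbounded {h₀ : ℕ → ℕ} (hh : h₀ ∈ Ffam) : ¬ UnboundedIn {h₀} Ffam := by
  obtain ⟨hmono, X, hX, hle⟩ := hh
  have hle' : ∀ᶠ n in atTop, h₀ n ≤ hFun X n := hle
  obtain ⟨Y, hYX, hY, hd⟩ := split_infinite hX
  intro hu
  obtain ⟨h, hhmem, hnlt⟩ := hu (hFun Y) (hFun_mem_F hY)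
  rw [Set.mem_singleton_iff] at hhmem
  subst hhmem
  apply hnlt
  show ∀ᶠ n in atTop, h n < hFun Y n
  filter_upwards [hle', prec_hFun' hX hY hYX hd 1] with n h1 h2
  omega

lemma subsingleton_not_unbounded {H : Set (ℕ → ℕ)} (hHF : H ⊆ Ffam) (hs : H.Subsingleton) :
    ¬ UnboundedIn H Ffam := by
  rcases H.eq_empty_or_nonempty with rfl | ⟨h₀, hh₀⟩
  · intro hu
    obtain ⟨h, hh, -⟩ := hu (hFun Set.univ) (hFun_mem_F Set.infinite_univ)
    exact absurd hh (Set.notMem_empty h)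
  · have hH : H = {h₀} := hs.eq_singleton_of_mem hh₀
    rw [hH]
    exact singleton_not_unbounded (hHF hh₀)

/-- The downward closure of `{h_X : X infinite}` is in the S-class
and has bounding number `2`; no single member is unbounded in it, since
`h_X ≺ h_Y` whenever `Y ⊆ X` with `X \ Y` infinite. -/
theorem sclass_bounding_two :
    SClass {f | Monotone f ∧ ∃ X : Set ℕ, X.Infinite ∧ LeStar f (hFun X)} ∧
    bNum {f | Monotone f ∧ ∃ X : Set ℕ, X.Infinite ∧ LeStar f (hFun X)} = 2 ∧
    (∀ f ∈ {f | Monotone f ∧ ∃ X : Set ℕ, X.Infinite ∧ LeStar f (hFun X)},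
      ¬ UnboundedIn {f} {f | Monotone f ∧ ∃ X : Set ℕ, X.Infinite ∧ LeStar f (hFun X)}) ∧
    (∀ X Y : Set ℕ, X.Infinite → Y.Infinite → Y ⊆ X → (X \ Y).Infinite →
      Prec (hFun X) (hFun Y)) := by
  have hX0 : (Set.range u1).Infinite := Set.infinite_range_of_injective hu1.injective
  have hY0 : (Set.range u2).Infinite := Set.infinite_range_of_injective hu2.injective
  refine ⟨?_, ?_, fun f hf => singleton_not_unbounded hf,
    fun X Y hX hY hYX hd => prec_hFun' hX hY hYX hd⟩
  · -- SClass
    refine ⟨fun n => 2 * n, id, fun a b h => by dsimp only; omega, monotone_id, ?_, ?_⟩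
    · rintro f ⟨hmono, Z, hZ, hle⟩
      have hle' : ∀ᶠ n in atTop, f n ≤ hFun Z n := hle
      obtain ⟨t, ht⟩ := eventually_atTop.mp hle'
      rw [Nat.frequently_atTop_iff_infinite]
      have hsub : {n | n ∈ Z ∧ t ≤ n} ⊆ {n | f n ≤ 2 * n} := by
        rintro n ⟨hnZ, hnt⟩
        exact le_trans (ht n hnt) (in_Z_le hnZ)
      exact Set.Infinite.mono hsub (tail_infinite hZ t)
    · intro f hmono hfreq
      simp only [id_eq] at hfreq
      have hinf : {n | f n ≤ n}.Infinite := Nat.frequently_atTop_iff_infinite.mp hfreq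
      refine ⟨hmono, {n | f n ≤ n}, hinf, Eventually.of_forall fun n => ?_⟩
      obtain ⟨hmem, hge⟩ := nextIn_mem hinf n
      calc f n ≤ f (nextIn n {n | f n ≤ n}) := hmono hge
      _ ≤ nextIn n {n | f n ≤ n} := hmem
      _ ≤ hFun {n | f n ≤ n} n := Nat.le_add_right _ _
  · -- bNum = 2
    have hne : hFun (Set.range u1) ≠ hFun (Set.range u2) := by
      intro heq
      have h1 := (hFun_range_eq hu1 (n := 0) (k := 0) (fun j => by simp)).2
      have h2 := (hFun_range_eq hu2 (n := 0) (k := 0) (fun j => by simp)).2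
      have h3 := congrFun heq 0
      rw [h1, h2] at h3
      norm_num [u1, u2] at h3
    have h2S : (2 : Cardinal) ∈ {c : Cardinal | ∃ H : Set (ℕ → ℕ),
        H ⊆ Ffam ∧ UnboundedIn H Ffam ∧ Cardinal.mk H = c} := by
      refine ⟨{hFun (Set.range u1), hFun (Set.range u2)}, ?_, ?_, ?_⟩
      · rintro h (rfl | rfl)
        · exact hFun_mem_F hX0
        · exact hFun_mem_F hY0
      · rintro f ⟨hmono, Z, hZ, hle⟩
        have hle' : ∀ᶠ n in atTop, f n ≤ hFun Z n := hle
        obtain ⟨t, ht⟩ := eventually_atTop.mp hle'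
        have hsub : {n | n ∈ Z ∧ t ≤ n} ⊆
            {n | f n ≤ hFun (Set.range u1) n} ∪ {n | f n ≤ hFun (Set.range u2) n} := by
          rintro n ⟨hnZ, hnt⟩
          have hfn : f n ≤ 2 * n := le_trans (ht n hnt) (in_Z_le hnZ)
          rcases core n with h | h
          · exact Or.inl (hfn.trans h)
          · exact Or.inr (hfn.trans h)
        have hun := Set.Infinite.mono hsub (tail_infinite hZ t)
        rcases Set.infinite_union.mp hun with h | h
        · exact ⟨_, Or.inl rfl, not_ltStar_of_infinite h⟩
        · exact ⟨_, Or.inr rfl, not_ltStar_of_infinite h⟩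
      · rw [Cardinal.mk_insert (by simpa using hne), Cardinal.mk_singleton]
        exact one_add_one_eq_two
    have hlb : ∀ c ∈ {c : Cardinal | ∃ H : Set (ℕ → ℕ),
        H ⊆ Ffam ∧ UnboundedIn H Ffam ∧ Cardinal.mk H = c}, (2 : Cardinal) ≤ c := by
      rintro c ⟨H, hHF, hHu, rfl⟩
      rw [Cardinal.two_le_iff_one_lt]
      by_contra hc
      exact subsingleton_not_unbounded hHF
        (Cardinal.mk_le_one_iff_set_subsingleton.mp (not_lt.mp hc)) hHu
    exact le_antisymm (csInf_le (OrderBot.bddBelow _) h2S) (le_csInf ⟨2, h2S⟩ hlb)
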